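/- arXiv:1107.0176 — 4 statements merged into one kernel-verified Lean document; each statement's English description precedes it below -/
import Mathlib

section
/- Let H and G be simple graphs and let φ : H → G be a locally surjective graph homomorphism. Let e = {u, v} be an edge of G. Say that an edge {x, y} of H represents e if {φ(x), φ(y)} = {u, v}. Then φ (on the same vertex sets) is a locally surjective graph homomorphism from the graph obtained from H by deleting all edges that represent e to the graph obtained from G by deleting the edge e. -/
/-- If `φ : H → G` is a locally surjective graph homomorphism (an emulator projection)
and `e = {u,v}` is an edge of `G`, then `φ` (on the same vertex sets) is a locally
surjective graph homomorphism from the graph obtained from `H` by deleting all edges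
representing `e` (i.e. edges `{x,y}` with `{φ x, φ y} = {u,v}`) to the graph obtained
from `G` by deleting the edge `e`. -/
theorem emulator_delete_edge
    {V W : Type*} (H : SimpleGraph V) (G : SimpleGraph W) (φ : H →g G)
    (hls : ∀ x : V, Set.SurjOn ⇑φ (H.neighborSet x) (G.neighborSet (φ x)))
    (u v : W) (huv : G.Adj u v) :
    (∀ a b : V,
        (H.deleteEdges {e : Sym2 V | Sym2.map ⇑φ e = s(u, v)}).Adj a b →
          (G.deleteEdges {s(u, v)}).Adj (φ a) (φ b)) ∧
    (∀ x : V,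
        Set.SurjOn ⇑φ
          ((H.deleteEdges {e : Sym2 V | Sym2.map ⇑φ e = s(u, v)}).neighborSet x)
          ((G.deleteEdges {s(u, v)}).neighborSet (φ x))) := by
  constructor
  · intro a b hab
    rw [SimpleGraph.deleteEdges_adj] at hab ⊢
    refine ⟨φ.map_adj hab.1, ?_⟩
    simpa using hab.2
  · intro x y hy
    rw [SimpleGraph.mem_neighborSet, SimpleGraph.deleteEdges_adj] at hy
    obtain ⟨z, hz, hzy⟩ := hls x hy.1
    refine ⟨z, ?_, hzy⟩
    rw [SimpleGraph.mem_neighborSet, SimpleGraph.deleteEdges_adj]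
    refine ⟨hz, ?_⟩
    simp only [Set.mem_setOf_eq, Sym2.map_pair_eq]
    rw [hzy]
    simpa using hy.2
end

section
/- Let H and G be simple graphs, let φ : H → G be a locally surjective graph homomorphism, and let v be a vertex of G of degree exactly 3. Suppose every vertex in the fiber φ⁻¹(v) has degree exactly 3 in H. Define the YΔ-transform G' of G at v as the simple graph on V(G) \ {v} in which two distinct vertices u, w are adjacent if and only if they are adjacent in G, or both u and w are neighbors of v in G. Define H' as the simple graph on V(H) \ φ⁻¹(v) in which two distinct vertices a, b are adjacent if and only if they are adjacent in H, or there exists x ∈ φ⁻¹(v) adjacent in H to both a and b. Then the restriction of φ to V(H) \ φ⁻¹(v) is a locally surjective graph homomorphism from H' to G'. -/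
/-- The `YΔ`-transform of a simple graph `G` at a vertex `v`: the simple graph on
`V(G) \ {v}` in which two distinct vertices are adjacent iff they are adjacent in `G`,
or both are neighbors of `v` in `G`. -/
def ydeltaTransform {W : Type*} (G : SimpleGraph W) (v : W) :
    SimpleGraph {w : W // w ≠ v} where
  Adj a b := a ≠ b ∧ (G.Adj a.1 b.1 ∨ (G.Adj v a.1 ∧ G.Adj v b.1))
  symm := ⟨fun a b h => ⟨h.1.symm, h.2.elim (fun h' => Or.inl h'.symm) (fun h' => Or.inr ⟨h'.2, h'.1⟩)⟩⟩
  loopless := ⟨fun a h => h.1 rfl⟩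

/-- The simultaneous `YΔ`-transform of `H` at all vertices of the fiber `φ⁻¹(v)`:
the simple graph on `V(H) \ φ⁻¹(v)` in which two distinct vertices are adjacent iff
they are adjacent in `H`, or some vertex of the fiber `φ⁻¹(v)` is adjacent in `H`
to both of them. -/
def ydeltaFiberTransform {V W : Type*} (H : SimpleGraph V) (φ : V → W) (v : W) :
    SimpleGraph {x : V // φ x ≠ v} where
  Adj a b := a ≠ b ∧ (H.Adj a.1 b.1 ∨ ∃ x : V, φ x = v ∧ H.Adj x a.1 ∧ H.Adj x b.1)
  symm := ⟨fun a b h => ⟨h.1.symm, h.2.elim (fun h' => Or.inl h'.symm)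
    (fun ⟨x, hx, h1, h2⟩ => Or.inr ⟨x, hx, h2, h1⟩)⟩⟩
  loopless := ⟨fun a h => h.1 rfl⟩

/-- If `φ : H → G` is a locally surjective graph homomorphism (an emulator projection),
`v` is a vertex of `G` of degree exactly `3`, and every vertex of the fiber `φ⁻¹(v)`
has degree exactly `3` in `H`, then the restriction of `φ` to `V(H) \ φ⁻¹(v)` is a
locally surjective graph homomorphism from the simultaneous `YΔ`-transform of `H` at
the fiber `φ⁻¹(v)` to the `YΔ`-transform of `G` at `v`. -/
theorem emulator_ydelta
    {V W : Type*} (H : SimpleGraph V) (G : SimpleGraph W) (φ : H →g G)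
    (hls : ∀ x : V, Set.SurjOn ⇑φ (H.neighborSet x) (G.neighborSet (φ x)))
    (v : W) (hdegv : (G.neighborSet v).ncard = 3)
    (hfib : ∀ x : V, φ x = v → (H.neighborSet x).ncard = 3) :
    (∀ a b : {x : V // φ x ≠ v},
        (ydeltaFiberTransform H ⇑φ v).Adj a b →
          (ydeltaTransform G v).Adj ⟨φ a.1, a.2⟩ ⟨φ b.1, b.2⟩) ∧
    (∀ a : {x : V // φ x ≠ v},
        Set.SurjOn (fun x : {x : V // φ x ≠ v} => (⟨φ x.1, x.2⟩ : {w : W // w ≠ v}))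
          ((ydeltaFiberTransform H ⇑φ v).neighborSet a)
          ((ydeltaTransform G v).neighborSet ⟨φ a.1, a.2⟩)) := by
  -- Injectivity of φ on the neighborhood of any fiber vertex
  have hinj : ∀ x : V, φ x = v → Set.InjOn ⇑φ (H.neighborSet x) := by
    intro x hx
    have hmaps : ∀ a ∈ H.neighborSet x, φ a ∈ G.neighborSet (φ x) := by
      intro a ha
      exact φ.map_adj ha
    have hcard : (H.neighborSet x).ncard ≤ (G.neighborSet (φ x)).ncard := by
      rw [hfib x hx, hx, hdegv]
    have hfin : (H.neighborSet x).Finite :=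
      Set.finite_of_ncard_ne_zero (by rw [hfib x hx]; norm_num)
    intro a ha b hb hab
    exact Set.inj_on_of_surj_on_of_ncard_le (t := G.neighborSet (φ x))
      (fun a _ => φ a) (fun a ha => hmaps a ha)
      (fun u hu => by obtain ⟨b, hb, rfl⟩ := hls x hu; exact ⟨b, hb, rfl⟩)
      hcard ha hb hab hfin
  constructor
  · rintro a b ⟨hab, h | ⟨x, hx, h1, h2⟩⟩
    · exact ⟨by simp only [ne_eq, Subtype.mk.injEq]; exact fun h' => (φ.map_adj h).ne h',
        Or.inl (φ.map_adj h)⟩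
    · have ha1 : G.Adj (φ x) (φ a.1) := φ.map_adj h1
      have hb1 : G.Adj (φ x) (φ b.1) := φ.map_adj h2
      rw [hx] at ha1 hb1
      refine ⟨?_, Or.inr ⟨ha1, hb1⟩⟩
      simp only [ne_eq, Subtype.mk.injEq]
      intro h'
      have hv : (a : V) = (b : V) := hinj x hx h1 h2 h'
      exact hab (Subtype.ext hv)
  · rintro a ⟨u, hu⟩ hadj
    obtain ⟨hne, hG | ⟨hv1, hv2⟩⟩ := hadj
    · obtain ⟨b, hb, hbu⟩ := hls a.1 hG
      have hbv : φ b ≠ v := by rw [hbu]; exact hu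
      refine ⟨⟨b, hbv⟩, ⟨?_, Or.inl (by exact hb)⟩, by simp [hbu]⟩
      intro h
      apply hne
      simp only [ne_eq, Subtype.mk.injEq] at h ⊢
      rw [h]; exact hbu
    · -- v is a neighbor of φ a, find a fiber vertex x adjacent to a
      obtain ⟨x, hx, hxv⟩ := hls a.1 (G.adj_symm hv1)
      -- u is a neighbor of v = φ x, find b adjacent to x with φ b = u
      obtain ⟨b, hb, hbu⟩ := hls x (by rw [hxv]; exact hv2)
      have hbv : φ b ≠ v := by rw [hbu]; exact hu
      refine ⟨⟨b, hbv⟩, ⟨?_, Or.inr ⟨x, hxv, by exact H.adj_symm hx, by exact hb⟩⟩,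
        by simp [hbu]⟩
      intro h
      apply hne
      simp only [ne_eq, Subtype.mk.injEq] at h ⊢
      rw [h]; exact hbu
end

section
/- Let H and G be simple graphs, let φ : H → G be a locally surjective graph homomorphism, and let y₁ ≠ y₂ be vertices of H with φ(y₁) = φ(y₂). Define H' as the simple graph on V(H) \ {y₂} in which two distinct vertices a, b are adjacent if and only if they are adjacent in H, or (a = y₁ and b is adjacent to y₂ in H), or (b = y₁ and a is adjacent to y₂ in H). Then the restriction of φ to V(H) \ {y₂} is a locally surjective graph homomorphism from H' to G. (Note that y₁ and y₂ are nonadjacent in H since they have the same image, so H' has no loop at y₁.) -/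
/-- Merging the vertex `y₂` into the vertex `y₁`: the simple graph on `V(H) \ {y₂}`
in which two distinct vertices `a, b` are adjacent iff they are adjacent in `H`, or
`a = y₁` and `b` is adjacent to `y₂` in `H`, or `b = y₁` and `a` is adjacent to `y₂`
in `H`. -/
def mergeVertices {V : Type*} (H : SimpleGraph V) (y₁ y₂ : V) :
    SimpleGraph {x : V // x ≠ y₂} where
  Adj a b := a ≠ b ∧ (H.Adj a.1 b.1 ∨ (a.1 = y₁ ∧ H.Adj y₂ b.1) ∨ (b.1 = y₁ ∧ H.Adj y₂ a.1))
  symm := ⟨fun a b h => ⟨h.1.symm, h.2.elim (fun h' => Or.inl h'.symm)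
    (fun h' => Or.inr h'.symm)⟩⟩
  loopless := ⟨fun a h => h.1 rfl⟩

/-- If `φ : H → G` is a locally surjective graph homomorphism (an emulator projection)
and `y₁ ≠ y₂` are two vertices of `H` with the same image under `φ`, then the
restriction of `φ` to `V(H) \ {y₂}` is a locally surjective graph homomorphism from
the graph obtained from `H` by merging `y₂` into `y₁` to `G`. -/
theorem emulator_merge_vertices
    {V W : Type*} (H : SimpleGraph V) (G : SimpleGraph W) (φ : H →g G)
    (hls : ∀ x : V, Set.SurjOn ⇑φ (H.neighborSet x) (G.neighborSet (φ x)))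
    (y₁ y₂ : V) (hne : y₁ ≠ y₂) (heq : φ y₁ = φ y₂) :
    (∀ a b : {x : V // x ≠ y₂},
        (mergeVertices H y₁ y₂).Adj a b → G.Adj (φ a.1) (φ b.1)) ∧
    (∀ a : {x : V // x ≠ y₂},
        Set.SurjOn (fun x : {x : V // x ≠ y₂} => φ x.1)
          ((mergeVertices H y₁ y₂).neighborSet a)
          (G.neighborSet (φ a.1))) := by
  constructor
  · rintro a b ⟨hab, h | ⟨ha, hb⟩ | ⟨hb, ha⟩⟩
    · exact φ.map_adj h
    · rw [ha, heq]; exact φ.map_adj hb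
    · rw [hb, heq]; exact (φ.map_adj ha).symm
  · intro a w hw
    obtain ⟨v, hv, hφv⟩ := hls a.1 hw
    by_cases hvy : v = y₂
    · subst hvy
      have hay : a.1 ≠ y₁ := by
        intro h
        have := φ.map_adj hv
        rw [h, heq] at this
        exact G.loopless.irrefl _ this
      refine ⟨⟨y₁, hne⟩, ⟨?_, Or.inr (Or.inr ⟨rfl, hv.symm⟩)⟩, by simpa [heq] using hφv⟩
      intro h
      exact hay (congrArg Subtype.val h)
    · exact ⟨⟨v, hvy⟩, ⟨fun h => H.ne_of_adj hv (congrArg Subtype.val h),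
        Or.inl hv⟩, hφv⟩
end

section
/- Let H and G be simple graphs, let φ : H → G be a locally surjective graph homomorphism, and let x be a vertex of H. Let A and B be sets of vertices of H whose union is the neighborhood of x in H, and suppose that φ maps A onto the whole neighborhood of φ(x) in G and also maps B onto the whole neighborhood of φ(x) in G. Define the graph H' on the vertex set V(H) with one additional new vertex x⋆, where: two vertices of V(H) \ {x} are adjacent in H' if and only if they are adjacent in H; x is adjacent in H' exactly to the vertices of A; and x⋆ is adjacent in H' exactly to the vertices of B. Extend φ to φ' : H' → G by setting φ'(x⋆) = φ(x) and φ' = φ on V(H). Then φ' is a locally surjective graph homomorphism from H' to G. -/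
/-- Splitting the vertex `x` of `H` into `x` and a new vertex `x⋆` (modelled by `none`
in `Option V`, while every original vertex `a` is modelled by `some a`): two original
vertices other than `x` are adjacent iff they are adjacent in `H`; the vertex `x` is
adjacent exactly to the vertices of `A`; and the new vertex `x⋆` is adjacent exactly
to the vertices of `B`. -/
def splitVertex {V : Type*} (H : SimpleGraph V) (x : V) (A B : Set V) :
    SimpleGraph (Option V) where
  Adj p q := p ≠ q ∧
    ((∃ a b : V, p = some a ∧ q = some b ∧
        ((a ≠ x ∧ b ≠ x ∧ H.Adj a b) ∨ (a = x ∧ b ∈ A) ∨ (b = x ∧ a ∈ A))) ∨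
      (∃ b : V, p = none ∧ q = some b ∧ b ∈ B) ∨
      (∃ a : V, q = none ∧ p = some a ∧ a ∈ B))
  symm := ⟨fun p q h => by
    obtain ⟨hne, h⟩ := h
    refine ⟨hne.symm, ?_⟩
    rcases h with ⟨a, b, hp, hq, hab⟩ | ⟨b, hp, hq, hb⟩ | ⟨a, hq, hp, ha⟩
    · exact Or.inl ⟨b, a, hq, hp, by tauto⟩
    · exact Or.inr (Or.inr ⟨b, hp, hq, hb⟩)
    · exact Or.inr (Or.inl ⟨a, hq, hp, ha⟩)⟩
  loopless := ⟨fun p h => h.1 rfl⟩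

/-- Vertex splitting in an emulator: let `φ : H → G` be a locally surjective graph
homomorphism, `x` a vertex of `H`, and `A, B` sets of vertices whose union is the
neighborhood of `x` in `H`, each of which is mapped by `φ` onto the whole neighborhood
of `φ x` in `G`. Extend `φ` to the split graph by sending the new vertex `x⋆` (i.e.
`none`) to `φ x`. Then the extended map is a locally surjective graph homomorphism
from the split graph to `G`. -/
theorem emulator_split_vertex
    {V W : Type*} (H : SimpleGraph V) (G : SimpleGraph W) (φ : H →g G)
    (hls : ∀ y : V, Set.SurjOn ⇑φ (H.neighborSet y) (G.neighborSet (φ y)))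
    (x : V) (A B : Set V) (hAB : A ∪ B = H.neighborSet x)
    (hA : Set.SurjOn ⇑φ A (G.neighborSet (φ x)))
    (hB : Set.SurjOn ⇑φ B (G.neighborSet (φ x))) :
    (∀ p q : Option V,
        (splitVertex H x A B).Adj p q →
          G.Adj (p.elim (φ x) ⇑φ) (q.elim (φ x) ⇑φ)) ∧
    (∀ p : Option V,
        Set.SurjOn (fun q : Option V => q.elim (φ x) ⇑φ)
          ((splitVertex H x A B).neighborSet p)
          (G.neighborSet (p.elim (φ x) ⇑φ))) := by
  have hA' : A ⊆ H.neighborSet x := hAB ▸ Set.subset_union_left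
  have hB' : B ⊆ H.neighborSet x := hAB ▸ Set.subset_union_right
  constructor
  · rintro p q ⟨hne, ⟨a, b, rfl, rfl, ⟨ha, hb, hadj⟩ | ⟨rfl, hb⟩ | ⟨rfl, ha⟩⟩ |
      ⟨b, rfl, rfl, hb⟩ | ⟨a, rfl, rfl, ha⟩⟩
    · exact φ.map_adj hadj
    · exact φ.map_adj (hA' hb)
    · exact (φ.map_adj (hA' ha)).symm
    · exact φ.map_adj (hB' hb)
    · exact (φ.map_adj (hB' ha)).symm
  · rintro (_ | a)
    · intro w hw
      obtain ⟨b, hb, rfl⟩ := hB hw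
      exact ⟨some b, ⟨by simp, Or.inr (Or.inl ⟨b, rfl, rfl, hb⟩)⟩, rfl⟩
    · intro w hw
      by_cases hax : a = x
      · subst hax
        obtain ⟨b, hb, rfl⟩ := hA hw
        have hbx : b ≠ a := fun h => H.loopless.irrefl a (h ▸ hA' hb)
        exact ⟨some b, ⟨by simpa using hbx.symm,
          Or.inl ⟨a, b, rfl, rfl, Or.inr (Or.inl ⟨rfl, hb⟩)⟩⟩, rfl⟩
      · obtain ⟨c, hc, rfl⟩ := hls a hw
        by_cases hcx : c = x
        · subst hcx
          have haN : a ∈ A ∪ B := by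
            rw [hAB]; exact (H.adj_symm hc : H.Adj c a)
          rcases haN with haA | haB
          · exact ⟨some c, ⟨by simpa using hax,
              Or.inl ⟨a, c, rfl, rfl, Or.inr (Or.inr ⟨rfl, haA⟩)⟩⟩, rfl⟩
          · exact ⟨none, ⟨by simp, Or.inr (Or.inr ⟨a, rfl, rfl, haB⟩)⟩, rfl⟩
        · have hac : a ≠ c := H.ne_of_adj hc
          exact ⟨some c, ⟨by simpa using hac,
            Or.inl ⟨a, c, rfl, rfl, Or.inl ⟨hax, hcx, hc⟩⟩⟩, rfl⟩
end
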